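/- Let 𝒦 be a collection of compact subsets of ℂ^N totally ordered by inclusion, and let K_∞ = ⋂_{K∈𝒦} K. Then the rational hull of K_∞ equals ⋂_{K∈𝒦} (rational hull of K). -/

import Mathlib

open MvPolynomial

noncomputable def polyHull {N : ℕ} (K : Set (Fin N → ℂ)) : Set (Fin N → ℂ) :=
  {z | ∀ p : MvPolynomial (Fin N) ℂ,
    ‖eval z p‖ ≤ sSup ((fun x => ‖eval x p‖) '' K)}

def IsPolyConvex {N : ℕ} (K : Set (Fin N → ℂ)) : Prop := polyHull K = K

def rationalHull {N : ℕ} (K : Set (Fin N → ℂ)) : Set (Fin N → ℂ) :=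
  {z | ∀ p : MvPolynomial (Fin N) ℂ, eval z p = 0 → ∃ x ∈ K, eval x p = 0}

noncomputable def polyHull1 (S : Set ℂ) : Set ℂ :=
  {w | ∀ p : Polynomial ℂ, ‖p.eval w‖ ≤ sSup ((fun s => ‖p.eval s‖) '' S)}

noncomputable def PX {N : ℕ} (X : Set (Fin N → ℂ)) : Set C(X, ℂ) :=
  closure {f : C(X, ℂ) | ∃ p : MvPolynomial (Fin N) ℂ,
    ∀ x : X, f x = eval (x : Fin N → ℂ) p}

def SameGleasonPart {N : ℕ} (H : Set (Fin N → ℂ)) (x y : Fin N → ℂ) : Prop :=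
  ∃ c ≥ (1 : ℝ), ∀ p : MvPolynomial (Fin N) ℂ,
    (∀ z ∈ H, (eval z p).re ≤ 0) →
    c * (eval y p).re ≤ (eval x p).re ∧ c * (eval x p).re ≤ (eval y p).re

theorem stmt3 {N : ℕ} (𝒦 : Set (Set (Fin N → ℂ))) (hne : 𝒦.Nonempty)
    (hcomp : ∀ K ∈ 𝒦, IsCompact K) (hchain : IsChain (· ⊆ ·) 𝒦) :
    rationalHull (⋂₀ 𝒦) = ⋂ K ∈ 𝒦, rationalHull K := by
  apply Set.Subset.antisymm
  · intro z hz
    simp only [Set.mem_iInter]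
    intro K hK p hp
    obtain ⟨x, hx, hxp⟩ := hz p hp
    exact ⟨x, hx K hK, hxp⟩
  · intro z hz p hp
    simp only [Set.mem_iInter] at hz
    have : Nonempty 𝒦 := hne.to_subtype
    set t : 𝒦 → Set (Fin N → ℂ) := fun K => {x ∈ (K : Set (Fin N → ℂ)) | eval x p = 0}
      with ht
    have hzero : IsClosed {x : Fin N → ℂ | eval x p = 0} :=
      isClosed_eq (MvPolynomial.continuous_eval p) continuous_const
    have hdir : Directed (· ⊇ ·) t := by
      intro K L
      rcases hchain.total K.2 L.2 with h | h
      · exact ⟨K, le_refl _, fun x hx => ⟨h hx.1, hx.2⟩⟩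
      · exact ⟨L, fun x hx => ⟨h hx.1, hx.2⟩, le_refl _⟩
    have hnon : ∀ K : 𝒦, (t K).Nonempty := fun K => by
      obtain ⟨x, hx, hxp⟩ := hz K K.2 p hp
      exact ⟨x, hx, hxp⟩
    have hc : ∀ K : 𝒦, IsCompact (t K) := fun K =>
      ((hcomp K K.2).inter_right hzero)
    have hcl : ∀ K : 𝒦, IsClosed (t K) := fun K =>
      (((hcomp K K.2).isClosed).inter hzero)
    obtain ⟨x, hx⟩ := IsCompact.nonempty_iInter_of_directed_nonempty_isCompact_isClosed
      t hdir hnon hc hcl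
    simp only [Set.mem_iInter, ht, Set.mem_setOf_eq] at hx
    refine ⟨x, ?_, (hx ⟨_, hne.choose_spec⟩).2⟩
    intro K hK
    exact (hx ⟨K, hK⟩).1
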